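/- With R1, R2, Θ independent, R1 ~ μ_{λ1,c1}, R2 ~ μ_{λ2,c2}, Θ uniform on (0, π), and ρ = √(R1² + R2² − 2·R1·R2·cos Θ), for every r with c1·t < r ≤ (c1 + c2)·t the joint probability P(ρ < r, R1 = c1·t, R2 < c2·t) equals e^{−λ1t}·[1 − exp(−λ2t + (λ2/c2)·√(c2²t² − (r − c1t)²))] + (λ2·e^{−(λ1+λ2)t}/(π·c2)) · ∫_{r−c1t}^{c2t} arccos((ξ² + (c1t)² − r²)/(2·c1t·ξ)) · ξ·(c2²t² − ξ²)^{−1/2} · exp((λ2/c2)·√(c2²t² − ξ²)) dξ. -/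

import Mathlib

open MeasureTheory ProbabilityTheory

/-- Density of the absolutely continuous part of the law of the distance from
the origin of a planar Markov random flight with speed `c` and rate `lam` at time `t`. -/
noncomputable def fac (t lam c z : ℝ) : ℝ :=
  if 0 < z ∧ z < c * t then
    (lam / c) * z / Real.sqrt (c ^ 2 * t ^ 2 - z ^ 2) *
      Real.exp (-(lam * t) + (lam / c) * Real.sqrt (c ^ 2 * t ^ 2 - z ^ 2))
  else 0

/-- The law of the distance from the origin of a planar Markov random flight:
singular part `e^{-λt}·δ_{ct}` plus absolutely continuous part with density `fac`. -/
noncomputable def flightLaw (t lam c : ℝ) : Measure ℝ :=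
  ENNReal.ofReal (Real.exp (-(lam * t))) • Measure.dirac (c * t) +
    volume.withDensity fun z => ENNReal.ofReal (fac t lam c z)

/-- The uniform probability measure on a set `s ⊆ ℝ`. -/
noncomputable def uniformMeasure (s : Set ℝ) : Measure ℝ :=
  (volume s)⁻¹ • volume.restrict s

/-- The Euclidean distance between the two flights, expressed through the radii
`R1, R2` and the angle `Θ` via the law of cosines. -/
noncomputable def rho {Ω : Type*} (R1 R2 Θ : Ω → ℝ) (ω : Ω) : ℝ :=
  Real.sqrt (R1 ω ^ 2 + R2 ω ^ 2 - 2 * R1 ω * R2 ω * Real.cos (Θ ω))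

lemma fac_nonneg (t lam c : ℝ) (hl : 0 < lam) (hc : 0 < c) (z : ℝ) : 0 ≤ fac t lam c z := by
  unfold fac
  split
  · next h => have hz := h.1; positivity
  · exact le_refl _

lemma fac_measurable (t lam c : ℝ) : Measurable (fac t lam c) := by
  unfold fac
  refine Measurable.ite ?_ (by fun_prop) measurable_const
  exact measurableSet_Ioo (a := (0:ℝ)) (b := c*t)

lemma arccos_of_le_neg_one {x : ℝ} (h : x ≤ -1) : Real.arccos x = Real.pi := by
  rw [Real.arccos, Real.arcsin_of_le_neg_one h]; ring

lemma cos_angle_set (a : ℝ) :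
    {θ : ℝ | a < Real.cos θ} ∩ Set.Ioo 0 Real.pi = Set.Ioo 0 (Real.arccos a) := by
  have hπ := Real.pi_pos
  ext θ
  simp only [Set.mem_inter_iff, Set.mem_setOf_eq, Set.mem_Ioo]
  constructor
  · rintro ⟨hcos, h0, hpi⟩
    refine ⟨h0, ?_⟩
    rcases le_or_gt a (-1) with h1 | h1
    · rw [arccos_of_le_neg_one h1]; exact hpi
    · have ha1 : a < 1 := lt_of_lt_of_le hcos (Real.cos_le_one θ)
      by_contra hle
      push_neg at hle
      have hmono : Real.cos θ ≤ Real.cos (Real.arccos a) := by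
        rcases eq_or_lt_of_le hle with he | hlt
        · rw [he]
        · exact le_of_lt (Real.strictAntiOn_cos ⟨Real.arccos_nonneg a, Real.arccos_le_pi a⟩
            ⟨h0.le, hpi.le⟩ hlt)
      rw [Real.cos_arccos h1.le ha1.le] at hmono
      linarith
  · rintro ⟨h0, hθ⟩
    have hπa := Real.arccos_le_pi a
    rcases le_or_gt a (-1) with h1 | h1
    · rw [arccos_of_le_neg_one h1] at hθ
      have hc : Real.cos Real.pi < Real.cos θ :=
        Real.strictAntiOn_cos ⟨h0.le, hθ.le⟩ ⟨hπ.le, le_refl _⟩ hθ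
      rw [Real.cos_pi] at hc
      exact ⟨lt_of_le_of_lt h1 hc, h0, hθ⟩
    · rcases le_or_gt a 1 with h2 | h2
      · have hθπ : θ < Real.pi := lt_of_lt_of_le hθ hπa
        have hc : Real.cos (Real.arccos a) < Real.cos θ :=
          Real.strictAntiOn_cos ⟨h0.le, hθπ.le⟩ ⟨Real.arccos_nonneg a, hπa⟩ hθ
        rw [Real.cos_arccos h1.le h2] at hc
        exact ⟨hc, h0, hθπ⟩
      · exfalso
        rw [Real.arccos_eq_zero.2 h2.le] at hθ
        linarith

lemma hasDerivAt_F (t lam c : ℝ) {y : ℝ} (hy0 : 0 < y) (hy : y < c * t) :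
    HasDerivAt (fun x : ℝ => -Real.exp (-(lam * t) + (lam / c) * Real.sqrt (c ^ 2 * t ^ 2 - x ^ 2)))
      (fac t lam c y) y := by
  have hpos : 0 < c ^ 2 * t ^ 2 - y ^ 2 := by nlinarith
  have h1 : HasDerivAt (fun x : ℝ => c ^ 2 * t ^ 2 - x ^ 2) (-(2 * y)) y := by
    simpa using (hasDerivAt_pow 2 y).const_sub (c ^ 2 * t ^ 2)
  have h2 : HasDerivAt (fun x : ℝ => Real.sqrt (c ^ 2 * t ^ 2 - x ^ 2))
      (1 / (2 * Real.sqrt (c ^ 2 * t ^ 2 - y ^ 2)) * (-(2 * y))) y :=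
    (Real.hasDerivAt_sqrt (ne_of_gt hpos)).comp y h1
  have h3 : HasDerivAt (fun x : ℝ => -(lam * t) + (lam / c) * Real.sqrt (c ^ 2 * t ^ 2 - x ^ 2))
      ((lam / c) * (1 / (2 * Real.sqrt (c ^ 2 * t ^ 2 - y ^ 2)) * (-(2 * y)))) y :=
    (h2.const_mul (lam / c)).const_add (-(lam * t))
  have h4 := h3.exp.neg
  convert h4 using 1
  have hs : Real.sqrt (c ^ 2 * t ^ 2 - y ^ 2) ≠ 0 :=
    ne_of_gt (Real.sqrt_pos.2 hpos)
  rfl; rfl; rfl; rw [fac, if_pos ⟨hy0, hy⟩]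
  field_simp

lemma integral_fac (t lam c b : ℝ) (hc : 0 < c) (hb0 : 0 < b) (hb : b ≤ c * t)
    (hint : IntervalIntegrable (fac t lam c) volume 0 b) :
    ∫ y in (0:ℝ)..b, fac t lam c y
      = 1 - Real.exp (-(lam * t) + (lam / c) * Real.sqrt (c ^ 2 * t ^ 2 - b ^ 2)) := by
  have hcont : ContinuousOn
      (fun x : ℝ => -Real.exp (-(lam * t) + (lam / c) * Real.sqrt (c ^ 2 * t ^ 2 - x ^ 2)))
      (Set.Icc 0 b) := by fun_prop
  have := intervalIntegral.integral_eq_sub_of_hasDeriv_right_of_le hb0.le hcont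
    (fun x hx => (hasDerivAt_F t lam c hx.1 (lt_of_lt_of_le hx.2 hb)).hasDerivWithinAt) hint
  rw [this]
  have h0 : Real.sqrt (c ^ 2 * t ^ 2 - 0 ^ 2) = c * t := by
    rw [show c ^ 2 * t ^ 2 - 0 ^ 2 = (c * t) ^ 2 by ring,
      Real.sqrt_sq (le_trans hb0.le hb)]
  rw [h0]
  have : -(lam * t) + lam / c * (c * t) = 0 := by field_simp; ring
  rw [this, Real.exp_zero]
  ring

theorem joint_prob_second_switched_large_r {Ω : Type*} [MeasureSpace Ω] [IsProbabilityMeasure (ℙ : Measure Ω)]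
    (t l1 l2 c1 c2 : ℝ) (ht : 0 < t) (hl1 : 0 < l1) (hl2 : 0 < l2)
    (hc2 : 0 < c2) (hc12 : c2 ≤ c1)
    (R1 R2 Θ : Ω → ℝ) (hmR1 : Measurable R1) (hmR2 : Measurable R2) (hmΘ : Measurable Θ)
    (hind : iIndepFun ![R1, R2, Θ] ℙ)
    (hR1 : Measure.map R1 ℙ = flightLaw t l1 c1)
    (hR2 : Measure.map R2 ℙ = flightLaw t l2 c2)
    (hΘ : Measure.map Θ ℙ = uniformMeasure (Set.Ioo 0 Real.pi))
    (r : ℝ) (hr0 : c1 * t < r) (hr : r ≤ (c1 + c2) * t) :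
    ℙ {ω | rho R1 R2 Θ ω < r ∧ R1 ω = c1 * t ∧ R2 ω < c2 * t}
      = ENNReal.ofReal
          (Real.exp (-(l1 * t)) *
              (1 - Real.exp (-(l2 * t) +
                (l2 / c2) * Real.sqrt (c2 ^ 2 * t ^ 2 - (r - c1 * t) ^ 2)))
            + l2 * Real.exp (-((l1 + l2) * t)) / (Real.pi * c2) *
              (∫ ξ in (r - c1 * t)..(c2 * t),
              Real.arccos ((ξ ^ 2 + (c1 * t) ^ 2 - r ^ 2) / (2 * (c1 * t) * ξ)) *
                (ξ / Real.sqrt (c2 ^ 2 * t ^ 2 - ξ ^ 2)) *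
                Real.exp ((l2 / c2) * Real.sqrt (c2 ^ 2 * t ^ 2 - ξ ^ 2)))) := by
  have hπ := Real.pi_pos
  have hc1 : 0 < c1 := lt_of_lt_of_le hc2 hc12
  have hct1 : 0 < c1 * t := mul_pos hc1 ht
  have hB : 0 < c2 * t := mul_pos hc2 ht
  have hrpos : 0 < r := lt_trans hct1 hr0
  set b := r - c1 * t with hbdef
  have hb0 : 0 < b := by simp only [hbdef]; linarith
  have hbB : b ≤ c2 * t := by simp only [hbdef]; nlinarith [hr]
  set A : ℝ → ℝ := fun y => (y ^ 2 + (c1 * t) ^ 2 - r ^ 2) / (2 * (c1 * t) * y) with hAdef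
  set S : Set (ℝ × ℝ) :=
    {p | Real.sqrt ((c1 * t) ^ 2 + p.1 ^ 2 - 2 * (c1 * t) * p.1 * Real.cos p.2) < r
      ∧ p.1 < c2 * t} with hSdef
  have hSmeas : MeasurableSet S := by
    have h1 : MeasurableSet {p : ℝ × ℝ |
        Real.sqrt ((c1 * t) ^ 2 + p.1 ^ 2 - 2 * (c1 * t) * p.1 * Real.cos p.2) < r} := by
      apply measurableSet_lt (by fun_prop) measurable_const
    have h2 : MeasurableSet {p : ℝ × ℝ | p.1 < c2 * t} :=
      measurableSet_lt measurable_fst measurable_const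
    exact h1.inter h2
  have hEvent : {ω | rho R1 R2 Θ ω < r ∧ R1 ω = c1 * t ∧ R2 ω < c2 * t}
      = ((fun ω => (R2 ω, Θ ω)) ⁻¹' S) ∩ (R1 ⁻¹' {c1 * t}) := by
    ext ω
    simp only [Set.mem_setOf_eq, Set.mem_inter_iff, Set.mem_preimage,
      Set.mem_singleton_iff, rho, hSdef]
    constructor
    · rintro ⟨h1, h2, h3⟩
      rw [h2] at h1
      exact ⟨⟨h1, h3⟩, h2⟩
    · rintro ⟨⟨h1, h3⟩, h2⟩
      rw [← h2] at h1
      exact ⟨h1, h2, h3⟩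
  have hmeasvec : ∀ i, Measurable (![R1, R2, Θ] i) := by
    intro i; fin_cases i <;> simpa using ‹_›
  have hIndep2 : IndepFun (fun ω => (R2 ω, Θ ω)) R1 ℙ := by
    have := hind.indepFun_prodMk hmeasvec 1 2 0 (by decide) (by decide)
    simpa using this
  have hfact : ℙ (((fun ω => (R2 ω, Θ ω)) ⁻¹' S) ∩ (R1 ⁻¹' {c1 * t}))
      = ℙ ((fun ω => (R2 ω, Θ ω)) ⁻¹' S) * ℙ (R1 ⁻¹' {c1 * t}) :=
    (indepFun_iff_measure_inter_preimage_eq_mul.1 hIndep2) S {c1 * t} hSmeas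
      (measurableSet_singleton _)
  have hP1 : ℙ (R1 ⁻¹' {c1 * t}) = ENNReal.ofReal (Real.exp (-(l1 * t))) := by
    rw [← Measure.map_apply hmR1 (measurableSet_singleton _), hR1, flightLaw,
      Measure.add_apply, Measure.smul_apply,
      Measure.dirac_apply' _ (measurableSet_singleton _),
      withDensity_apply _ (measurableSet_singleton _)]
    simp [setLIntegral_measure_zero _ _ Real.volume_singleton]
  have hIndep3 : IndepFun R2 Θ ℙ := by
    have := hind.indepFun (i := 1) (j := 2) (by decide)
    simpa using this
  have hmap2 : Measure.map (fun ω => (R2 ω, Θ ω)) ℙ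
      = (flightLaw t l2 c2).prod (uniformMeasure (Set.Ioo 0 Real.pi)) := by
    rw [← hR2, ← hΘ]
    exact (indepFun_iff_map_prod_eq_prod_map_map hmR2.aemeasurable hmΘ.aemeasurable).1 hIndep3
  have hSF : SFinite (uniformMeasure (Set.Ioo 0 Real.pi)) := by
    unfold uniformMeasure; infer_instance
  have hP2 : ℙ ((fun ω => (R2 ω, Θ ω)) ⁻¹' S)
      = ((flightLaw t l2 c2).prod (uniformMeasure (Set.Ioo 0 Real.pi))) S := by
    rw [← hmap2, Measure.map_apply (hmR2.prodMk hmΘ) hSmeas]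
  set g : ℝ → ENNReal := fun y => uniformMeasure (Set.Ioo 0 Real.pi) (Prod.mk y ⁻¹' S) with hgdef
  have hgmeas : Measurable g := measurable_measure_prodMk_left hSmeas
  have hprodS : ((flightLaw t l2 c2).prod (uniformMeasure (Set.Ioo 0 Real.pi))) S
      = ∫⁻ y, g y ∂(flightLaw t l2 c2) := Measure.prod_apply hSmeas
  have hgB : g (c2 * t) = 0 := by
    have hempty : Prod.mk (c2 * t) ⁻¹' S = ∅ := by
      ext θ; simp [hSdef]
    rw [hgdef]; simp only [hempty, measure_empty]
  have hfacmeas : Measurable fun z => ENNReal.ofReal (fac t l2 c2 z) :=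
    (fac_measurable t l2 c2).ennreal_ofReal
  have hlin : ∫⁻ y, g y ∂(flightLaw t l2 c2)
      = ∫⁻ y in Set.Ioo 0 (c2 * t), ENNReal.ofReal (fac t l2 c2 y) * g y := by
    rw [flightLaw, lintegral_add_measure, lintegral_smul_measure, lintegral_dirac' _ hgmeas,
      hgB, smul_zero, zero_add,
      lintegral_withDensity_eq_lintegral_mul _ hfacmeas hgmeas,
      ← lintegral_indicator measurableSet_Ioo]
    congr 1
    funext y
    by_cases hy : y ∈ Set.Ioo (0:ℝ) (c2 * t)
    · rw [Set.indicator_of_mem hy]; rfl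
    · rw [Set.indicator_of_notMem hy]
      have hz : fac t l2 c2 y = 0 := by
        rw [fac, if_neg]; simpa [Set.mem_Ioo] using hy
      simp [hz]
  have hgval : ∀ y ∈ Set.Ioo (0:ℝ) (c2 * t),
      g y = ENNReal.ofReal (Real.arccos (A y) / Real.pi) := by
    intro y hy
    have hy0 := hy.1
    have h2y : 0 < 2 * (c1 * t) * y := by positivity
    have hpre : Prod.mk y ⁻¹' S = {θ | A y < Real.cos θ} := by
      ext θ
      simp only [hSdef, Set.mem_preimage, Set.mem_setOf_eq, hy.2, and_true]
      rw [Real.sqrt_lt' hrpos, hAdef]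
      simp only []
      rw [div_lt_iff₀ h2y]
      constructor <;> intro h <;> nlinarith [h]
    have hmeascos : MeasurableSet {θ : ℝ | A y < Real.cos θ} :=
      measurableSet_lt measurable_const Real.continuous_cos.measurable
    rw [hgdef]
    simp only [hpre]
    rw [uniformMeasure, Measure.smul_apply, Measure.restrict_apply hmeascos,
      cos_angle_set, Real.volume_Ioo, Real.volume_Ioo, sub_zero, sub_zero,
      smul_eq_mul, ENNReal.ofReal_div_of_pos hπ, ENNReal.div_eq_inv_mul]
  -- replace g by its value on Ioo 0 (c2*t)
  have hstep1 : ∫⁻ y in Set.Ioo 0 (c2 * t), ENNReal.ofReal (fac t l2 c2 y) * g y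
      = ∫⁻ y in Set.Ioo 0 (c2 * t),
          ENNReal.ofReal (fac t l2 c2 y) * ENNReal.ofReal (Real.arccos (A y) / Real.pi) :=
    setLIntegral_congr_fun measurableSet_Ioo
      (fun y hy => by rw [hgval y hy])
  -- split the domain
  have hsplit : Set.Ioo (0:ℝ) (c2 * t) = Set.Ioo 0 b ∪ Set.Ico b (c2 * t) :=
    (Set.Ioo_union_Ico_eq_Ioo hb0 hbB).symm
  have hdisj : Disjoint (Set.Ioo (0:ℝ) b) (Set.Ico b (c2 * t)) := by
    rw [Set.disjoint_left]
    rintro x ⟨_, hxb⟩ ⟨hbx, _⟩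
    exact absurd hbx (not_le.2 hxb)
  have hstep2 : ∫⁻ y in Set.Ioo 0 (c2 * t),
        ENNReal.ofReal (fac t l2 c2 y) * ENNReal.ofReal (Real.arccos (A y) / Real.pi)
      = (∫⁻ y in Set.Ioo 0 b,
          ENNReal.ofReal (fac t l2 c2 y) * ENNReal.ofReal (Real.arccos (A y) / Real.pi))
        + ∫⁻ y in Set.Ico b (c2 * t),
          ENNReal.ofReal (fac t l2 c2 y) * ENNReal.ofReal (Real.arccos (A y) / Real.pi) := by
    rw [hsplit, lintegral_union measurableSet_Ico hdisj]
  -- on (0,b), the arccos factor is 1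
  have hfirst : ∫⁻ y in Set.Ioo 0 b,
        ENNReal.ofReal (fac t l2 c2 y) * ENNReal.ofReal (Real.arccos (A y) / Real.pi)
      = ∫⁻ y in Set.Ioo 0 b, ENNReal.ofReal (fac t l2 c2 y) := by
    apply setLIntegral_congr_fun measurableSet_Ioo
    intro y hy
    have hy0 := hy.1
    have h2y : 0 < 2 * (c1 * t) * y := by positivity
    have hA : A y ≤ -1 := by
      rw [hAdef]
      simp only []
      rw [div_le_iff₀ h2y]
      nlinarith [hy.2, hy.1, hct1, hrpos]
    beta_reduce; rw [arccos_of_le_neg_one hA, div_self (ne_of_gt hπ), ENNReal.ofReal_one, mul_one]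
  -- total mass bound
  have htot : ∫⁻ y, ENNReal.ofReal (fac t l2 c2 y) ∂volume ≤ 1 := by
    have hprob : IsProbabilityMeasure (Measure.map R2 ℙ) :=
      Measure.isProbabilityMeasure_map hmR2.aemeasurable
    have h1 : (flightLaw t l2 c2) Set.univ = 1 := by
      rw [← hR2]; exact hprob.measure_univ
    rw [flightLaw, Measure.add_apply, withDensity_apply _ MeasurableSet.univ,
      Measure.restrict_univ] at h1
    calc ∫⁻ y, ENNReal.ofReal (fac t l2 c2 y) ∂volume
        ≤ (ENNReal.ofReal (Real.exp (-(l2 * t))) • Measure.dirac (c2 * t)) Set.univ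
          + ∫⁻ y, ENNReal.ofReal (fac t l2 c2 y) ∂volume := le_add_self
      _ = 1 := h1
  -- the real-valued weighted density
  set φ : ℝ → ℝ := fun y => fac t l2 c2 y * (Real.arccos (A y) / Real.pi) with hφdef
  have hAmeas : Measurable A := by rw [hAdef]; fun_prop
  have hφmeas : Measurable φ := by
    rw [hφdef]
    exact (fac_measurable t l2 c2).mul
      ((Real.continuous_arccos.measurable.comp hAmeas).div_const Real.pi)
  have hφnonneg : ∀ y, 0 ≤ φ y := fun y =>
    mul_nonneg (fac_nonneg t l2 c2 hl2 hc2 y)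
      (div_nonneg (Real.arccos_nonneg _) hπ.le)
  -- first integral: convert to Bochner and evaluate
  have hI1fin : ∫⁻ y in Set.Ioo 0 b, ENNReal.ofReal (fac t l2 c2 y) < ⊤ :=
    lt_of_le_of_lt (le_trans (setLIntegral_le_lintegral _ _) htot) ENNReal.one_lt_top
  have hInt1 : IntegrableOn (fac t l2 c2) (Set.Ioo 0 b) volume :=
    ⟨(fac_measurable t l2 c2).aestronglyMeasurable,
      (hasFiniteIntegral_iff_ofReal (ae_of_all _ (fac_nonneg t l2 c2 hl2 hc2))).2 hI1fin⟩
  have hI1 : ∫⁻ y in Set.Ioo 0 b, ENNReal.ofReal (fac t l2 c2 y)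
      = ENNReal.ofReal (∫ y in Set.Ioo 0 b, fac t l2 c2 y) :=
    (ofReal_integral_eq_lintegral_ofReal hInt1
      (ae_of_all _ (fac_nonneg t l2 c2 hl2 hc2))).symm
  have hII : IntervalIntegrable (fac t l2 c2) volume 0 b := by
    rw [intervalIntegrable_iff_integrableOn_Ioo_of_le hb0.le]
    exact hInt1
  have hval1 : ∫ y in Set.Ioo 0 b, fac t l2 c2 y
      = 1 - Real.exp (-(l2 * t) + (l2 / c2) * Real.sqrt (c2 ^ 2 * t ^ 2 - b ^ 2)) := by
    rw [← integral_Ioc_eq_integral_Ioo, ← intervalIntegral.integral_of_le hb0.le]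
    exact integral_fac t l2 c2 b hc2 hb0 hbB hII
  -- second integral
  have hcong2 : ∀ y, ENNReal.ofReal (fac t l2 c2 y) * ENNReal.ofReal (Real.arccos (A y) / Real.pi)
      = ENNReal.ofReal (φ y) := fun y =>
    (ENNReal.ofReal_mul (fac_nonneg t l2 c2 hl2 hc2 y)).symm
  have hI2fin : ∫⁻ y in Set.Ico b (c2 * t), ENNReal.ofReal (φ y) < ⊤ := by
    have hle : ∫⁻ y in Set.Ico b (c2 * t), ENNReal.ofReal (φ y)
        ≤ ∫⁻ y in Set.Ico b (c2 * t), ENNReal.ofReal (fac t l2 c2 y) := by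
      apply lintegral_mono
      intro y
      show ENNReal.ofReal (φ y) ≤ ENNReal.ofReal (fac t l2 c2 y)
      rw [← hcong2 y]
      have h1 : ENNReal.ofReal (Real.arccos (A y) / Real.pi) ≤ 1 :=
        ENNReal.ofReal_le_one.2 ((div_le_one hπ).2 (Real.arccos_le_pi _))
      calc ENNReal.ofReal (fac t l2 c2 y) * ENNReal.ofReal (Real.arccos (A y) / Real.pi)
          ≤ ENNReal.ofReal (fac t l2 c2 y) * 1 := mul_le_mul_right h1 _
        _ = ENNReal.ofReal (fac t l2 c2 y) := mul_one _
    exact lt_of_le_of_lt (hle.trans ((setLIntegral_le_lintegral _ _).trans htot))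
      ENNReal.one_lt_top
  have hInt2 : IntegrableOn φ (Set.Ico b (c2 * t)) volume :=
    ⟨hφmeas.aestronglyMeasurable,
      (hasFiniteIntegral_iff_ofReal (ae_of_all _ hφnonneg)).2 hI2fin⟩
  have hI2 : ∫⁻ y in Set.Ico b (c2 * t), ENNReal.ofReal (fac t l2 c2 y) *
        ENNReal.ofReal (Real.arccos (A y) / Real.pi)
      = ENNReal.ofReal (∫ y in Set.Ico b (c2 * t), φ y) := by
    simp only [hcong2]
    exact (ofReal_integral_eq_lintegral_ofReal hInt2 (ae_of_all _ hφnonneg)).symm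
  -- identify the second integral with the stated interval integral
  have hJ : ∫ y in Set.Ico b (c2 * t), φ y
      = (l2 * Real.exp (-(l2 * t)) / (Real.pi * c2)) *
          ∫ ξ in b..(c2 * t),
            Real.arccos ((ξ ^ 2 + (c1 * t) ^ 2 - r ^ 2) / (2 * (c1 * t) * ξ)) *
              (ξ / Real.sqrt (c2 ^ 2 * t ^ 2 - ξ ^ 2)) *
              Real.exp ((l2 / c2) * Real.sqrt (c2 ^ 2 * t ^ 2 - ξ ^ 2)) := by
    rw [integral_Ico_eq_integral_Ioo, ← integral_Ioc_eq_integral_Ioo,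
      ← intervalIntegral.integral_of_le hbB, ← intervalIntegral.integral_const_mul]
    apply intervalIntegral.integral_congr
    intro y hy
    rw [Set.uIcc_of_le hbB] at hy
    have hy0 : 0 < y := lt_of_lt_of_le hb0 hy.1
    rcases lt_or_eq_of_le hy.2 with hlt | he
    · have hs : 0 < Real.sqrt (c2 ^ 2 * t ^ 2 - y ^ 2) :=
        Real.sqrt_pos.2 (by nlinarith)
      rw [hφdef]
      simp only []
      rw [fac, if_pos ⟨hy0, hlt⟩, Real.exp_add, hAdef]
      ring
    · rw [hφdef]
      simp only []
      rw [fac, if_neg (by rw [he]; rintro ⟨-, h⟩; exact lt_irrefl _ h)]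
      have h0 : Real.sqrt (c2 ^ 2 * t ^ 2 - y ^ 2) = 0 := by
        rw [he, show c2 ^ 2 * t ^ 2 - (c2 * t) ^ 2 = 0 by ring, Real.sqrt_zero]
      rw [h0]
      simp
  -- nonnegativity facts for the final combination
  have hs_le : Real.sqrt (c2 ^ 2 * t ^ 2 - b ^ 2) ≤ c2 * t := by
    calc Real.sqrt (c2 ^ 2 * t ^ 2 - b ^ 2) ≤ Real.sqrt (c2 ^ 2 * t ^ 2) :=
          Real.sqrt_le_sqrt (by nlinarith [sq_nonneg b])
      _ = c2 * t := by rw [show c2 ^ 2 * t ^ 2 = (c2 * t) ^ 2 by ring, Real.sqrt_sq hB.le]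
  have hX1 : 0 ≤ 1 - Real.exp (-(l2 * t) + (l2 / c2) * Real.sqrt (c2 ^ 2 * t ^ 2 - b ^ 2)) := by
    have hmul : (l2 / c2) * Real.sqrt (c2 ^ 2 * t ^ 2 - b ^ 2) ≤ (l2 / c2) * (c2 * t) :=
      mul_le_mul_of_nonneg_left hs_le (by positivity)
    have h2 : (l2 / c2) * (c2 * t) = l2 * t := by field_simp
    have : -(l2 * t) + (l2 / c2) * Real.sqrt (c2 ^ 2 * t ^ 2 - b ^ 2) ≤ 0 := by linarith
    have := Real.exp_le_one_iff.2 this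
    linarith
  have hX2 : 0 ≤ ∫ y in Set.Ico b (c2 * t), φ y :=
    setIntegral_nonneg measurableSet_Ico fun y _ => hφnonneg y
  -- final assembly
  rw [hEvent, hfact, hP1, hP2, hprodS, hlin, hstep1, hstep2, hfirst, hI1, hI2, hval1, hJ,
    ← ENNReal.ofReal_add hX1 (by rw [hJ] at hX2; exact hX2),
    ← ENNReal.ofReal_mul (by rw [hJ] at hX2; positivity)]
  congr 1
  rw [show Real.exp (-((l1 + l2) * t)) = Real.exp (-(l1 * t)) * Real.exp (-(l2 * t)) by
    rw [← Real.exp_add]; ring_nf]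
  ring
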